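/- Let f : ℝ → ℝ be continuously differentiable with bounded derivative, |f'| ≤ M. Then the superposition (Nemytskii) operator F : C(K) → C(K), F(ζ) = f ∘ ζ, on the space of continuous functions on a compact space K, is Fréchet differentiable at every ζ̄ ∈ C(K), with derivative h ↦ (f' ∘ ζ̄)·h, provided f' is additionally uniformly continuous on bounded intervals (e.g., Lipschitz on bounded sets). -/

import Mathlib

/-- Pointwise Taylor estimate from a Lipschitz bound on `f'` on a segment. -/
lemma taylor_key (f f' : ℝ → ℝ) (hf : ∀ x : ℝ, HasDerivAt f (f' x) x)
    (R L : ℝ) (hL : 0 ≤ L)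
    (hLip : ∀ x y : ℝ, |x| ≤ R → |y| ≤ R → |f' x - f' y| ≤ L * |x - y|)
    (a b : ℝ) (ha : |a| ≤ R) (hb : |b| ≤ R) :
    |f b - f a - f' a * (b - a)| ≤ L * |b - a| * |b - a| := by
  have habs1 : a - |b - a| ≤ a ⊓ b :=
    le_inf (by linarith [abs_nonneg (b - a)])
      (by have := le_abs_self (a - b); rw [abs_sub_comm] at this; linarith)
  have habs2 : a ⊔ b ≤ a + |b - a| :=
    sup_le (by linarith [abs_nonneg (b - a)]) (by linarith [le_abs_self (b - a)])
  have hmem : ∀ z ∈ Set.uIcc a b, |z| ≤ R ∧ |z - a| ≤ |b - a| := by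
    intro z hz
    obtain ⟨hz1, hz2⟩ := hz
    have hRa := abs_le.1 ha
    have hRb := abs_le.1 hb
    constructor
    · rw [abs_le]
      constructor
      · have : (-R : ℝ) ≤ a ⊓ b := le_inf hRa.1 hRb.1
        linarith
      · have : a ⊔ b ≤ R := sup_le hRa.2 hRb.2
        linarith
    · rw [abs_le]; constructor <;> linarith
  have key := (convex_uIcc a b).norm_image_sub_le_of_norm_hasDerivWithin_le
    (f := fun z => f z - f' a * z) (f' := fun z => f' z - f' a)
    (s := Set.uIcc a b) (C := L * |b - a|)
    (fun z _ => by
      have := ((hf z).sub ((hasDerivAt_id z).const_mul (f' a)))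
      convert this.hasDerivWithinAt using 1 <;> simp [Pi.sub_def])
    (fun z hz => by
      rw [Real.norm_eq_abs]
      calc |f' z - f' a| ≤ L * |z - a| := hLip z a (hmem z hz).1 ha
        _ ≤ L * |b - a| := by
            have := (hmem z hz).2
            exact mul_le_mul_of_nonneg_left this hL)
    (Set.left_mem_uIcc) (Set.right_mem_uIcc)
  rw [Real.norm_eq_abs, Real.norm_eq_abs] at key
  calc |f b - f a - f' a * (b - a)|
      = |(f b - f' a * b) - (f a - f' a * a)| := by ring_nf
    _ ≤ L * |b - a| * |b - a| := key

/-- The Nemytskii operator `F(ζ) = f ∘ ζ` on `C(K)` induced by a `C¹` function `f` with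
bounded derivative `f'` that is Lipschitz on bounded intervals is Fréchet differentiable
at every `ζb`, with derivative the multiplication operator `h ↦ (f' ∘ ζb)·h`. -/
theorem stmt14 {K : Type*} [TopologicalSpace K] [CompactSpace K]
    (f f' : ℝ → ℝ) (M : ℝ)
    (hf : ∀ x : ℝ, HasDerivAt f (f' x) x)
    (hM : ∀ x : ℝ, |f' x| ≤ M)
    (hLip : ∀ R : ℝ, 0 < R → ∃ L : ℝ, ∀ x y : ℝ, |x| ≤ R → |y| ≤ R →
      |f' x - f' y| ≤ L * |x - y|)
    (hfc : Continuous f) (hf'c : Continuous f')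
    (ζb : C(K, ℝ)) :
    HasFDerivAt (fun ζ : C(K, ℝ) => (⟨f, hfc⟩ : C(ℝ, ℝ)).comp ζ)
      ((ContinuousLinearMap.mul ℝ C(K, ℝ)) ((⟨f', hf'c⟩ : C(ℝ, ℝ)).comp ζb)) ζb := by
  rw [hasFDerivAt_iff_isLittleO_nhds_zero, Asymptotics.isLittleO_iff]
  set R : ℝ := ‖ζb‖ + 1 with hR
  obtain ⟨L, hL⟩ := hLip R (by positivity)
  set L' : ℝ := max L 0 with hL'
  have hL'0 : 0 ≤ L' := le_max_right _ _
  have hLip' : ∀ x y : ℝ, |x| ≤ R → |y| ≤ R → |f' x - f' y| ≤ L' * |x - y| := fun x y hx hy =>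
    (hL x y hx hy).trans (mul_le_mul_of_nonneg_right (le_max_left _ _) (abs_nonneg _))
  intro ε hε
  have hδ : 0 < min 1 (ε / (L' + 1)) := lt_min one_pos (by positivity)
  filter_upwards [Metric.ball_mem_nhds (0 : C(K, ℝ)) hδ] with h hmem
  rw [Metric.mem_ball, dist_zero_right] at hmem
  have hh1 : ‖h‖ ≤ 1 := le_of_lt (lt_of_lt_of_le hmem (min_le_left _ _))
  have hh2 : ‖h‖ ≤ ε / (L' + 1) := le_of_lt (lt_of_lt_of_le hmem (min_le_right _ _))
  apply ContinuousMap.norm_le _ (by positivity) |>.2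
  intro k
  have hval : ((⟨f, hfc⟩ : C(ℝ, ℝ)).comp (ζb + h) - (⟨f, hfc⟩ : C(ℝ, ℝ)).comp ζb -
      (ContinuousLinearMap.mul ℝ C(K, ℝ)) ((⟨f', hf'c⟩ : C(ℝ, ℝ)).comp ζb) h) k
      = f (ζb k + h k) - f (ζb k) - f' (ζb k) * h k := by
    simp [ContinuousLinearMap.mul_apply']
  have hζk : |ζb k| ≤ ‖ζb‖ := by
    simpa [Real.norm_eq_abs] using ζb.norm_coe_le_norm k
  have hhk : |h k| ≤ ‖h‖ := by
    simpa [Real.norm_eq_abs] using h.norm_coe_le_norm k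
  have key := taylor_key f f' hf R L' hL'0 hLip' (ζb k) (ζb k + h k)
    (by rw [hR]; linarith) (by rw [hR]; have := abs_add_le (ζb k) (h k); linarith)
  rw [Real.norm_eq_abs, hval]
  have heq : f (ζb k + h k) - f (ζb k) - f' (ζb k) * h k
      = f (ζb k + h k) - f (ζb k) - f' (ζb k) * ((ζb k + h k) - ζb k) := by ring_nf
  rw [heq]
  have hsimp : |(ζb k + h k) - ζb k| = |h k| := by ring_nf
  rw [hsimp] at key
  calc |f (ζb k + h k) - f (ζb k) - f' (ζb k) * ((ζb k + h k) - ζb k)|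
      ≤ L' * |h k| * |h k| := key
    _ ≤ L' * ‖h‖ * ‖h‖ := by gcongr <;> first | exact hL'0 | exact hhk
    _ ≤ ε * ‖h‖ := by
        have : L' * ‖h‖ ≤ ε := by
          calc L' * ‖h‖ ≤ L' * (ε / (L' + 1)) :=
                mul_le_mul_of_nonneg_left hh2 hL'0
            _ ≤ ε := by
                rw [mul_div_assoc']
                rw [div_le_iff₀ (by positivity)]
                nlinarith [hε.le]
        exact mul_le_mul_of_nonneg_right this (norm_nonneg h)
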